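/- arXiv:2201.01224 — 5 statements merged into one kernel-verified Lean document; each statement's English description precedes it below -/
import Mathlib

section
/- For every n ≥ 4, the number -4 is an eigenvalue of the adjacency matrix of the n-Queens' graph Q(n). -/
open Finset

/-- Two squares attack each other: same row, column, diagonal or antidiagonal. -/
abbrev queensRel (n : ℕ) (a b : Fin n × Fin n) : Prop :=
  a.1 = b.1 ∨ a.2 = b.2 ∨ (a.1 : ℤ) - (a.2 : ℤ) = (b.1 : ℤ) - (b.2 : ℤ) ∨
    (a.1 : ℤ) + (a.2 : ℤ) = (b.1 : ℤ) + (b.2 : ℤ)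

/-- The n-Queens' graph. -/
def queensGraph (n : ℕ) : SimpleGraph (Fin n × Fin n) := SimpleGraph.fromRel (queensRel n)

instance (n : ℕ) : DecidableRel (queensGraph n).Adj := fun a b =>
  decidable_of_iff (a ≠ b ∧ (queensRel n a b ∨ queensRel n b a)) Iff.rfl

def IsAdjEigenvalue {V : Type*} [Fintype V] [DecidableEq V] (G : SimpleGraph V)
    [DecidableRel G.Adj] (μ : ℝ) : Prop :=
  ∃ X : V → ℝ, X ≠ 0 ∧ (G.adjMatrix ℝ).mulVec X = μ • X

/-- The 4×4 pattern X₄ (0-indexed). -/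
def X4 : Fin 4 × Fin 4 → ℝ := fun p =>
  if (p.1 = 0 ∧ p.2 = 1) ∨ (p.1 = 1 ∧ p.2 = 3) ∨ (p.1 = 2 ∧ p.2 = 0) ∨ (p.1 = 3 ∧ p.2 = 2)
  then 1
  else if (p.1 = 0 ∧ p.2 = 2) ∨ (p.1 = 1 ∧ p.2 = 0) ∨ (p.1 = 2 ∧ p.2 = 3) ∨ (p.1 = 3 ∧ p.2 = 1)
  then -1 else 0

/-- The translate of `X4` with (0-indexed) upper-left corner `(a,b)`, zero elsewhere. -/
def Xab (n a b : ℕ) : Fin n × Fin n → ℝ := fun p =>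
  if h : a ≤ (p.1 : ℕ) ∧ (p.1 : ℕ) ≤ a + 3 ∧ b ≤ (p.2 : ℕ) ∧ (p.2 : ℕ) ≤ b + 3 then
    X4 (⟨(p.1 : ℕ) - a, by omega⟩, ⟨(p.2 : ℕ) - b, by omega⟩)
  else 0

/-- The pattern as a function on natural-number coordinates. -/
def qval (i j : ℕ) : ℝ :=
  if (i = 0 ∧ j = 1) ∨ (i = 1 ∧ j = 3) ∨ (i = 2 ∧ j = 0) ∨ (i = 3 ∧ j = 2) then 1
  else if (i = 0 ∧ j = 2) ∨ (i = 1 ∧ j = 0) ∨ (i = 2 ∧ j = 3) ∨ (i = 3 ∧ j = 1) then -1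
  else 0

lemma Xab_eq (n : ℕ) (p : Fin n × Fin n) : Xab n 0 0 p = qval p.1 p.2 := by
  unfold Xab X4 qval
  split_ifs with h h1 h2 h3 h4 h5 h6 <;> simp_all [Fin.ext_iff] <;> omega

lemma qval_big (i j : ℕ) (h : 4 ≤ i ∨ 4 ≤ j) : qval i j = 0 := by
  unfold qval; split_ifs <;> first | rfl | omega

lemma row_sum (n : ℕ) (hn : 4 ≤ n) (i : ℕ) : ∑ j ∈ range n, qval i j = 0 := by
  have hz : ∀ j ∈ range n, j ∉ range 4 → qval i j = 0 := by
    intro j _ hj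
    exact qval_big i j (Or.inr (by simpa using hj))
  rw [← Finset.sum_subset (Finset.range_subset_range.2 hn) hz]
  rcases Nat.lt_or_ge i 4 with hi | hi
  · interval_cases i <;>
      (simp only [Finset.sum_range_succ, Finset.sum_range_zero]; unfold qval; norm_num)
  · have : ∀ j ∈ range 4, qval i j = 0 := fun j _ => qval_big i j (Or.inl hi)
    rw [Finset.sum_congr rfl this]; simp

lemma col_sum (n : ℕ) (hn : 4 ≤ n) (j : ℕ) : ∑ i ∈ range n, qval i j = 0 := by
  have hz : ∀ i ∈ range n, i ∉ range 4 → qval i j = 0 := by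
    intro i _ hi
    exact qval_big i j (Or.inl (by simpa using hi))
  rw [← Finset.sum_subset (Finset.range_subset_range.2 hn) hz]
  rcases Nat.lt_or_ge j 4 with hj | hj
  · interval_cases j <;>
      (simp only [Finset.sum_range_succ, Finset.sum_range_zero]; unfold qval; norm_num)
  · have : ∀ i ∈ range 4, qval i j = 0 := fun i _ => qval_big i j (Or.inr hj)
    rw [Finset.sum_congr rfl this]; simp

lemma diag_sum (n : ℕ) (hn : 4 ≤ n) (c : ℤ) :
    ∑ i ∈ range n, ∑ j ∈ range n, (if (i : ℤ) - (j : ℤ) = c then qval i j else 0) = 0 := by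
  have h1 : ∀ i ∈ range n, ∑ j ∈ range n, (if (i : ℤ) - (j : ℤ) = c then qval i j else 0)
      = ∑ j ∈ range 4, (if (i : ℤ) - (j : ℤ) = c then qval i j else 0) := fun i _ => by
    rw [← Finset.sum_subset (Finset.range_subset_range.2 hn)]
    intro j _ hj
    rw [qval_big i j (Or.inr (by simpa using hj))]
    simp
  rw [Finset.sum_congr rfl h1, ← Finset.sum_subset (Finset.range_subset_range.2 hn)]
  · simp only [Finset.sum_range_succ, Finset.sum_range_zero]
    unfold qval
    norm_num
    split_ifs <;> norm_num
  · intro i _ hi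
    have : ∀ j ∈ range 4, (if (i : ℤ) - (j : ℤ) = c then qval i j else 0) = 0 := fun j _ => by
      rw [qval_big i j (Or.inl (by simpa using hi))]; simp
    rw [Finset.sum_congr rfl this]; simp

lemma anti_sum (n : ℕ) (hn : 4 ≤ n) (c : ℤ) :
    ∑ i ∈ range n, ∑ j ∈ range n, (if (i : ℤ) + (j : ℤ) = c then qval i j else 0) = 0 := by
  have h1 : ∀ i ∈ range n, ∑ j ∈ range n, (if (i : ℤ) + (j : ℤ) = c then qval i j else 0)
      = ∑ j ∈ range 4, (if (i : ℤ) + (j : ℤ) = c then qval i j else 0) := fun i _ => by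
    rw [← Finset.sum_subset (Finset.range_subset_range.2 hn)]
    intro j _ hj
    rw [qval_big i j (Or.inr (by simpa using hj))]
    simp
  rw [Finset.sum_congr rfl h1, ← Finset.sum_subset (Finset.range_subset_range.2 hn)]
  · simp only [Finset.sum_range_succ, Finset.sum_range_zero]
    unfold qval
    norm_num
    split_ifs <;> norm_num
  · intro i _ hi
    have : ∀ j ∈ range 4, (if (i : ℤ) + (j : ℤ) = c then qval i j else 0) = 0 := fun j _ => by
      rw [qval_big i j (Or.inl (by simpa using hi))]; simp
    rw [Finset.sum_congr rfl this]; simp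

lemma rowline (n : ℕ) (hn : 4 ≤ n) (a : ℕ) :
    ∑ i ∈ range n, ∑ j ∈ range n, (if i = a then qval i j else 0) = 0 := by
  refine Finset.sum_eq_zero fun i _ => ?_
  by_cases hi : i = a
  · subst hi
    simpa using row_sum n hn i
  · simp [hi]

lemma colline (n : ℕ) (hn : 4 ≤ n) (b : ℕ) :
    ∑ i ∈ range n, ∑ j ∈ range n, (if j = b then qval i j else 0) = 0 := by
  have e : ∀ i ∈ range n, ∑ j ∈ range n, (if j = b then qval i j else 0)
      = if b ∈ range n then qval i b else 0 := fun i _ => Finset.sum_ite_eq' _ _ _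
  rw [Finset.sum_congr rfl e]
  by_cases hb : b ∈ range n
  · simp only [hb, if_true]
    exact col_sum n hn b
  · simp [hb]

/-- Collapsing a sum over the board to a double range sum. -/
lemma conv1 (n : ℕ) (G : ℕ → ℕ → ℝ) :
    (∑ u : Fin n × Fin n, G u.1 u.2) = ∑ i ∈ range n, ∑ j ∈ range n, G i j := by
  rw [Fintype.sum_prod_type]
  rw [Fin.sum_univ_eq_sum_range (fun i => ∑ j : Fin n, G i j) n]
  exact Finset.sum_congr rfl fun i _ => Fin.sum_univ_eq_sum_range (fun j => G i j) n

/-- Pointwise decomposition of the adjacency indicator into the four line indicators. -/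
lemma key (n : ℕ) (p u : Fin n × Fin n) :
    (if (queensGraph n).Adj p u then Xab n 0 0 u else 0) =
      (if u.1 = p.1 then Xab n 0 0 u else 0) + (if u.2 = p.2 then Xab n 0 0 u else 0)
      + (if (u.1 : ℤ) - (u.2 : ℤ) = (p.1 : ℤ) - (p.2 : ℤ) then Xab n 0 0 u else 0)
      + (if (u.1 : ℤ) + (u.2 : ℤ) = (p.1 : ℤ) + (p.2 : ℤ) then Xab n 0 0 u else 0)
      - (if u = p then 4 * Xab n 0 0 p else 0) := by
  rcases p with ⟨pi, pj⟩
  rcases u with ⟨ui, uj⟩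
  simp only [queensGraph, SimpleGraph.fromRel_adj, queensRel, Xab_eq, ne_eq, Prod.mk.injEq,
    Prod.ext_iff, Fin.ext_iff]
  by_cases hu : (ui : ℕ) = (pi : ℕ) ∧ (uj : ℕ) = (pj : ℕ)
  · obtain ⟨h1, h2⟩ := hu
    simp only [h1, h2]
    simp only [and_self, not_true_eq_false, false_and, if_false, if_true, eq_self_iff_true]
    ring
  · split_ifs <;> first | ring1 | (exfalso; omega)

/-- `-4` is an eigenvalue of the n-Queens' graph for every `n ≥ 4`. -/
theorem queens_neg_four_eigenvalue (n : ℕ) (h : 4 ≤ n) :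
    IsAdjEigenvalue (queensGraph n) (-4) := by
  refine ⟨Xab n 0 0, ?_, ?_⟩
  · intro h0
    have h1 : Xab n 0 0 (⟨0, by omega⟩, ⟨1, by omega⟩) = 1 := by
      rw [Xab_eq]; norm_num [qval]
    rw [h0] at h1
    simp at h1
  · funext p
    have hmv : ((queensGraph n).adjMatrix ℝ).mulVec (Xab n 0 0) p
        = ∑ u : Fin n × Fin n, (if (queensGraph n).Adj p u then Xab n 0 0 u else 0) := by
      simp [Matrix.mulVec, dotProduct, SimpleGraph.adjMatrix_apply, ite_mul]
    rw [hmv, Finset.sum_congr rfl (fun u _ => key n p u), Finset.sum_sub_distrib,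
      Finset.sum_add_distrib, Finset.sum_add_distrib, Finset.sum_add_distrib]
    have t1 : (∑ u : Fin n × Fin n, if u.1 = p.1 then Xab n 0 0 u else 0) = 0 := by
      have e : ∀ u ∈ (univ : Finset (Fin n × Fin n)), (if u.1 = p.1 then Xab n 0 0 u else 0)
          = (if (u.1 : ℕ) = ((p.1 : ℕ)) then qval u.1 u.2 else 0) := by
        intro u _
        simp only [Xab_eq, Fin.ext_iff]
      rw [Finset.sum_congr rfl e]
      exact (conv1 n (fun i j => if i = ((p.1 : ℕ)) then qval i j else 0)).trans
        (rowline n h _)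
    have t2 : (∑ u : Fin n × Fin n, if u.2 = p.2 then Xab n 0 0 u else 0) = 0 := by
      have e : ∀ u ∈ (univ : Finset (Fin n × Fin n)), (if u.2 = p.2 then Xab n 0 0 u else 0)
          = (if (u.2 : ℕ) = ((p.2 : ℕ)) then qval u.1 u.2 else 0) := by
        intro u _
        simp only [Xab_eq, Fin.ext_iff]
      rw [Finset.sum_congr rfl e]
      exact (conv1 n (fun i j => if j = ((p.2 : ℕ)) then qval i j else 0)).trans
        (colline n h _)
    have t3 : (∑ u : Fin n × Fin n,
        if (u.1 : ℤ) - (u.2 : ℤ) = (p.1 : ℤ) - (p.2 : ℤ) then Xab n 0 0 u else 0) = 0 := by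
      have e : ∀ u ∈ (univ : Finset (Fin n × Fin n)),
          (if (u.1 : ℤ) - (u.2 : ℤ) = (p.1 : ℤ) - (p.2 : ℤ) then Xab n 0 0 u else 0)
          = (if (u.1 : ℤ) - (u.2 : ℤ) = (p.1 : ℤ) - (p.2 : ℤ) then qval u.1 u.2 else 0) := by
        intro u _
        rw [Xab_eq]
      rw [Finset.sum_congr rfl e]
      exact (conv1 n (fun i j => if (i : ℤ) - (j : ℤ) = (p.1 : ℤ) - (p.2 : ℤ)
        then qval i j else 0)).trans (diag_sum n h _)
    have t4 : (∑ u : Fin n × Fin n,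
        if (u.1 : ℤ) + (u.2 : ℤ) = (p.1 : ℤ) + (p.2 : ℤ) then Xab n 0 0 u else 0) = 0 := by
      have e : ∀ u ∈ (univ : Finset (Fin n × Fin n)),
          (if (u.1 : ℤ) + (u.2 : ℤ) = (p.1 : ℤ) + (p.2 : ℤ) then Xab n 0 0 u else 0)
          = (if (u.1 : ℤ) + (u.2 : ℤ) = (p.1 : ℤ) + (p.2 : ℤ) then qval u.1 u.2 else 0) := by
        intro u _
        rw [Xab_eq]
      rw [Finset.sum_congr rfl e]
      exact (conv1 n (fun i j => if (i : ℤ) + (j : ℤ) = (p.1 : ℤ) + (p.2 : ℤ)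
        then qval i j else 0)).trans (anti_sum n h _)
    have t5 : (∑ u : Fin n × Fin n, if u = p then 4 * Xab n 0 0 p else 0)
        = 4 * Xab n 0 0 p := by
      simp
    rw [t1, t2, t3, t4, t5]
    simp only [Pi.smul_apply, smul_eq_mul]
    ring
end

section
/- For every n ≥ 4 and every nonzero real vector X indexed by [n] × [n], X is an eigenvector of the n-Queens' graph Q(n) with eigenvalue -4 if and only if: (a) every row sum and every column sum of X is zero; (b) the sum of X over each diagonal {(i,j) : i+j = c} with at least two squares is zero; (c) the sum of X over each antidiagonal {(i,j) : i−j = c} with at least two squares is zero; and (d) X vanishes at the four corner squares (1,1), (1,n), (n,1), (n,n). -/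
open Finset

def dsum (n : ℕ) (X : Fin n × Fin n → ℝ) (c : ℤ) : ℝ :=
  ∑ p ∈ Finset.univ.filter (fun p : Fin n × Fin n => (p.1 : ℤ) - (p.2 : ℤ) = c), X p

def asum (n : ℕ) (X : Fin n × Fin n → ℝ) (c : ℕ) : ℝ :=
  ∑ p ∈ Finset.univ.filter (fun p : Fin n × Fin n => (p.1 : ℕ) + (p.2 : ℕ) = c), X p

lemma pointwise (n : ℕ) (X : Fin n × Fin n → ℝ) (p b : Fin n × Fin n) :
    (if (queensGraph n).Adj p b then X b else 0) =
      (if b.1 = p.1 then X b else 0) + (if b.2 = p.2 then X b else 0) +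
      (if (b.1 : ℤ) - (b.2 : ℤ) = (p.1 : ℤ) - (p.2 : ℤ) then X b else 0) +
      (if (b.1 : ℕ) + (b.2 : ℕ) = (p.1 : ℕ) + (p.2 : ℕ) then X b else 0) -
      4 * (if b = p then X b else 0) := by
  have hadj : (queensGraph n).Adj p b ↔ p ≠ b ∧ (queensRel n p b ∨ queensRel n b p) :=
    SimpleGraph.fromRel_adj _ _ _
  have hbp : (b = p) ↔ ((b.1 : ℕ) = (p.1 : ℕ) ∧ (b.2 : ℕ) = (p.2 : ℕ)) := by
    simp [Prod.ext_iff, Fin.ext_iff]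
  have h1' : (b.1 = p.1) ↔ ((b.1 : ℕ) = (p.1 : ℕ)) := Fin.ext_iff
  have h2' : (b.2 = p.2) ↔ ((b.2 : ℕ) = (p.2 : ℕ)) := Fin.ext_iff
  by_cases h1 : (b.1 : ℕ) = (p.1 : ℕ) <;> by_cases h2 : (b.2 : ℕ) = (p.2 : ℕ) <;>
    by_cases h3 : (b.1 : ℤ) - (b.2 : ℤ) = (p.1 : ℤ) - (p.2 : ℤ) <;>
    by_cases h4 : (b.1 : ℕ) + (b.2 : ℕ) = (p.1 : ℕ) + (p.2 : ℕ) <;>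
    simp only [hadj, hbp, h1', h2', queensRel, Prod.ext_iff, Fin.ext_iff, ne_eq,
      if_pos, if_neg, h1, h2, h3, h4] <;>
    first
      | (exfalso; omega)
      | (simp_all; try ring_nf; try omega)

lemma mulVec_formula (n : ℕ) (X : Fin n × Fin n → ℝ) (p : Fin n × Fin n) :
    ((queensGraph n).adjMatrix ℝ).mulVec X p =
      (∑ j : Fin n, X (p.1, j)) + (∑ i : Fin n, X (i, p.2)) +
      dsum n X ((p.1 : ℤ) - (p.2 : ℤ)) + asum n X ((p.1 : ℕ) + (p.2 : ℕ)) - 4 * X p := by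
  rw [SimpleGraph.adjMatrix_mulVec_apply, SimpleGraph.neighborFinset_eq_filter,
    Finset.sum_filter]
  have hrow : (∑ j : Fin n, X (p.1, j)) =
      ∑ b : Fin n × Fin n, if b.1 = p.1 then X b else 0 := by
    rw [Fintype.sum_prod_type]
    have hsw : ∀ i : Fin n, (∑ j : Fin n, if i = p.1 then X (i, j) else 0)
        = if i = p.1 then ∑ j : Fin n, X (i, j) else 0 := by
      intro i; split <;> simp
    simp only [show (fun (b : Fin n × Fin n) => b.1 = p.1) = fun b => b.1 = p.1 from rfl]
    rw [show (∑ i : Fin n, ∑ j : Fin n, if (i, j).1 = p.1 then X (i, j) else 0)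
        = ∑ i : Fin n, if i = p.1 then ∑ j : Fin n, X (i, j) else 0 from
      Finset.sum_congr rfl fun i _ => hsw i, Finset.sum_ite_eq' univ p.1]
    simp
  have hcol : (∑ i : Fin n, X (i, p.2)) =
      ∑ b : Fin n × Fin n, if b.2 = p.2 then X b else 0 := by
    rw [Fintype.sum_prod_type_right]
    have hsw : ∀ j : Fin n, (∑ i : Fin n, if j = p.2 then X (i, j) else 0)
        = if j = p.2 then ∑ i : Fin n, X (i, j) else 0 := by
      intro j; split <;> simp
    rw [show (∑ j : Fin n, ∑ i : Fin n, if (i, j).2 = p.2 then X (i, j) else 0)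
        = ∑ j : Fin n, if j = p.2 then ∑ i : Fin n, X (i, j) else 0 from
      Finset.sum_congr rfl fun j _ => hsw j, Finset.sum_ite_eq' univ p.2]
    simp
  have hd : dsum n X ((p.1 : ℤ) - (p.2 : ℤ)) =
      ∑ b : Fin n × Fin n, if (b.1 : ℤ) - (b.2 : ℤ) = (p.1 : ℤ) - (p.2 : ℤ) then X b else 0 := by
    rw [dsum, Finset.sum_filter]
  have ha : asum n X ((p.1 : ℕ) + (p.2 : ℕ)) =
      ∑ b : Fin n × Fin n, if (b.1 : ℕ) + (b.2 : ℕ) = (p.1 : ℕ) + (p.2 : ℕ) then X b else 0 := by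
    rw [asum, Finset.sum_filter]
  have hp : X p = ∑ b : Fin n × Fin n, if b = p then X b else 0 := by
    rw [Finset.sum_eq_single p] <;> simp +contextual
  rw [hrow, hcol, hd, ha, hp, ← Finset.sum_add_distrib, ← Finset.sum_add_distrib,
    ← Finset.sum_add_distrib, Finset.mul_sum, ← Finset.sum_sub_distrib]
  exact Finset.sum_congr rfl fun b _ => pointwise n X p b

lemma dsum_out (n : ℕ) (X : Fin n × Fin n → ℝ) (c : ℤ)
    (hc : c ∉ Finset.Icc (-(n : ℤ) + 1) ((n : ℤ) - 1)) : dsum n X c = 0 := by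
  rw [dsum]
  apply Finset.sum_eq_zero
  intro p hp
  exfalso
  simp only [Finset.mem_filter, Finset.mem_univ, true_and] at hp
  simp only [Finset.mem_Icc, not_and_or, not_le] at hc
  have h1 := p.1.isLt; have h2 := p.2.isLt
  omega

lemma asum_out (n : ℕ) (X : Fin n × Fin n → ℝ) (c : ℕ)
    (hc : c ∉ Finset.range (2 * n - 1)) : asum n X c = 0 := by
  rw [asum]
  apply Finset.sum_eq_zero
  intro p hp
  exfalso
  simp only [Finset.mem_filter, Finset.mem_univ, true_and] at hp
  simp only [Finset.mem_range, not_lt] at hc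
  have h1 := p.1.isLt; have h2 := p.2.isLt
  omega

lemma lines_zero (n : ℕ) (X : Fin n × Fin n → ℝ)
    (hE : ∀ p : Fin n × Fin n,
      (∑ j : Fin n, X (p.1, j)) + (∑ i : Fin n, X (i, p.2)) +
      dsum n X ((p.1 : ℤ) - (p.2 : ℤ)) + asum n X ((p.1 : ℕ) + (p.2 : ℕ)) = 0) :
    (∀ i : Fin n, ∑ j : Fin n, X (i, j) = 0) ∧ (∀ j : Fin n, ∑ i : Fin n, X (i, j) = 0) ∧
    (∀ c : ℤ, dsum n X c = 0) ∧ (∀ c : ℕ, asum n X c = 0) := by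
  have h0 : ∑ p : Fin n × Fin n, X p *
      ((∑ j : Fin n, X (p.1, j)) + (∑ i : Fin n, X (i, p.2)) +
       dsum n X ((p.1 : ℤ) - (p.2 : ℤ)) + asum n X ((p.1 : ℕ) + (p.2 : ℕ))) = 0 := by
    apply Finset.sum_eq_zero
    intro p _
    rw [hE p, mul_zero]
  have hsplit : ∑ p : Fin n × Fin n, X p *
      ((∑ j : Fin n, X (p.1, j)) + (∑ i : Fin n, X (i, p.2)) +
       dsum n X ((p.1 : ℤ) - (p.2 : ℤ)) + asum n X ((p.1 : ℕ) + (p.2 : ℕ)))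
      = (∑ p : Fin n × Fin n, X p * (∑ j : Fin n, X (p.1, j)))
      + (∑ p : Fin n × Fin n, X p * (∑ i : Fin n, X (i, p.2)))
      + (∑ p : Fin n × Fin n, X p * dsum n X ((p.1 : ℤ) - (p.2 : ℤ)))
      + (∑ p : Fin n × Fin n, X p * asum n X ((p.1 : ℕ) + (p.2 : ℕ))) := by
    rw [← Finset.sum_add_distrib, ← Finset.sum_add_distrib, ← Finset.sum_add_distrib]
    exact Finset.sum_congr rfl fun p _ => by ring
  have hT1 : (∑ p : Fin n × Fin n, X p * (∑ j : Fin n, X (p.1, j)))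
      = ∑ i : Fin n, (∑ j : Fin n, X (i, j)) ^ 2 := by
    rw [Fintype.sum_prod_type]
    refine Finset.sum_congr rfl fun i _ => ?_
    have hr : ∑ y : Fin n, X (i, y) * ∑ j : Fin n, X ((i, y).1, j)
        = ∑ y : Fin n, X (i, y) * ∑ j : Fin n, X (i, j) := rfl
    rw [hr, ← Finset.sum_mul]
    ring
  have hT2 : (∑ p : Fin n × Fin n, X p * (∑ i : Fin n, X (i, p.2)))
      = ∑ j : Fin n, (∑ i : Fin n, X (i, j)) ^ 2 := by
    rw [Fintype.sum_prod_type_right]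
    refine Finset.sum_congr rfl fun j _ => ?_
    have hr : ∑ y : Fin n, X (y, j) * ∑ i : Fin n, X (i, (y, j).2)
        = ∑ y : Fin n, X (y, j) * ∑ i : Fin n, X (i, j) := rfl
    rw [hr, ← Finset.sum_mul]
    ring
  have hmapd : ∀ p : Fin n × Fin n, p ∈ (Finset.univ : Finset (Fin n × Fin n)) →
      ((p.1 : ℤ) - (p.2 : ℤ)) ∈ Finset.Icc (-(n : ℤ) + 1) ((n : ℤ) - 1) := by
    intro p _
    have h1 := p.1.isLt; have h2 := p.2.isLt
    simp only [Finset.mem_Icc]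
    omega
  have hT3 : (∑ p : Fin n × Fin n, X p * dsum n X ((p.1 : ℤ) - (p.2 : ℤ)))
      = ∑ c ∈ Finset.Icc (-(n : ℤ) + 1) ((n : ℤ) - 1), (dsum n X c) ^ 2 := by
    rw [← Finset.sum_fiberwise_of_maps_to hmapd (fun p => X p * dsum n X ((p.1 : ℤ) - (p.2 : ℤ)))]
    refine Finset.sum_congr rfl fun c _ => ?_
    have : ∑ p ∈ Finset.univ.filter
        (fun p : Fin n × Fin n => (p.1 : ℤ) - (p.2 : ℤ) = c),
        X p * dsum n X ((p.1 : ℤ) - (p.2 : ℤ))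
        = ∑ p ∈ Finset.univ.filter
        (fun p : Fin n × Fin n => (p.1 : ℤ) - (p.2 : ℤ) = c), X p * dsum n X c := by
      refine Finset.sum_congr rfl fun p hp => ?_
      simp only [Finset.mem_filter] at hp
      rw [hp.2]
    rw [this, ← Finset.sum_mul, ← dsum]
    ring
  have hmapa : ∀ p : Fin n × Fin n, p ∈ (Finset.univ : Finset (Fin n × Fin n)) →
      ((p.1 : ℕ) + (p.2 : ℕ)) ∈ Finset.range (2 * n - 1) := by
    intro p _
    have h1 := p.1.isLt; have h2 := p.2.isLt
    simp only [Finset.mem_range]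
    omega
  have hT4 : (∑ p : Fin n × Fin n, X p * asum n X ((p.1 : ℕ) + (p.2 : ℕ)))
      = ∑ c ∈ Finset.range (2 * n - 1), (asum n X c) ^ 2 := by
    rw [← Finset.sum_fiberwise_of_maps_to hmapa (fun p => X p * asum n X ((p.1 : ℕ) + (p.2 : ℕ)))]
    refine Finset.sum_congr rfl fun c _ => ?_
    have : ∑ p ∈ Finset.univ.filter
        (fun p : Fin n × Fin n => (p.1 : ℕ) + (p.2 : ℕ) = c),
        X p * asum n X ((p.1 : ℕ) + (p.2 : ℕ))
        = ∑ p ∈ Finset.univ.filter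
        (fun p : Fin n × Fin n => (p.1 : ℕ) + (p.2 : ℕ) = c), X p * asum n X c := by
      refine Finset.sum_congr rfl fun p hp => ?_
      simp only [Finset.mem_filter] at hp
      rw [hp.2]
    rw [this, ← Finset.sum_mul, ← asum]
    ring
  rw [hsplit, hT1, hT2, hT3, hT4] at h0
  have n1 : (0:ℝ) ≤ ∑ i : Fin n, (∑ j : Fin n, X (i, j)) ^ 2 :=
    Finset.sum_nonneg fun _ _ => sq_nonneg _
  have n2 : (0:ℝ) ≤ ∑ j : Fin n, (∑ i : Fin n, X (i, j)) ^ 2 :=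
    Finset.sum_nonneg fun _ _ => sq_nonneg _
  have n3 : (0:ℝ) ≤ ∑ c ∈ Finset.Icc (-(n : ℤ) + 1) ((n : ℤ) - 1), (dsum n X c) ^ 2 :=
    Finset.sum_nonneg fun _ _ => sq_nonneg _
  have n4 : (0:ℝ) ≤ ∑ c ∈ Finset.range (2 * n - 1), (asum n X c) ^ 2 :=
    Finset.sum_nonneg fun _ _ => sq_nonneg _
  have e1 : ∑ i : Fin n, (∑ j : Fin n, X (i, j)) ^ 2 = 0 := by linarith
  have e2 : ∑ j : Fin n, (∑ i : Fin n, X (i, j)) ^ 2 = 0 := by linarith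
  have e3 : ∑ c ∈ Finset.Icc (-(n : ℤ) + 1) ((n : ℤ) - 1), (dsum n X c) ^ 2 = 0 := by linarith
  have e4 : ∑ c ∈ Finset.range (2 * n - 1), (asum n X c) ^ 2 = 0 := by linarith
  refine ⟨fun i => ?_, fun j => ?_, fun c => ?_, fun c => ?_⟩
  · have := (Finset.sum_eq_zero_iff_of_nonneg (fun x _ => sq_nonneg _)).1 e1 i (Finset.mem_univ i)
    exact pow_eq_zero_iff (by norm_num) |>.1 this
  · have := (Finset.sum_eq_zero_iff_of_nonneg (fun x _ => sq_nonneg _)).1 e2 j (Finset.mem_univ j)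
    exact pow_eq_zero_iff (by norm_num) |>.1 this
  · by_cases hc : c ∈ Finset.Icc (-(n : ℤ) + 1) ((n : ℤ) - 1)
    · have := (Finset.sum_eq_zero_iff_of_nonneg (fun x _ => sq_nonneg _)).1 e3 c hc
      exact pow_eq_zero_iff (by norm_num) |>.1 this
    · exact dsum_out n X c hc
  · by_cases hc : c ∈ Finset.range (2 * n - 1)
    · have := (Finset.sum_eq_zero_iff_of_nonneg (fun x _ => sq_nonneg _)).1 e4 c hc
      exact pow_eq_zero_iff (by norm_num) |>.1 this
    · exact asum_out n X c hc

lemma asum_zero (n : ℕ) (hn : 4 ≤ n) (X : Fin n × Fin n → ℝ) :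
    asum n X 0 = X (⟨0, by have := X; omega⟩, ⟨0, by have := X; omega⟩) := by
  rw [asum]
  rw [show Finset.univ.filter (fun p : Fin n × Fin n => (p.1 : ℕ) + (p.2 : ℕ) = 0)
      = {(⟨0, by have := X; omega⟩, ⟨0, by have := X; omega⟩)} from by
    ext ⟨a, b⟩
    simp [Prod.ext_iff, Fin.ext_iff]
    try omega]
  rw [Finset.sum_singleton]

lemma asum_top (n : ℕ) (hn : 4 ≤ n) (X : Fin n × Fin n → ℝ) :
    asum n X (2 * n - 2) = X (⟨n - 1, by have := X; omega⟩, ⟨n - 1, by have := X; omega⟩) := by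
  rw [asum]
  rw [show Finset.univ.filter (fun p : Fin n × Fin n => (p.1 : ℕ) + (p.2 : ℕ) = 2 * n - 2)
      = {(⟨n - 1, by have := X; omega⟩, ⟨n - 1, by have := X; omega⟩)} from by
    ext ⟨a, b⟩
    have := a.isLt; have := b.isLt
    simp [Prod.ext_iff, Fin.ext_iff]
    try omega]
  rw [Finset.sum_singleton]

lemma dsum_top (n : ℕ) (hn : 4 ≤ n) (X : Fin n × Fin n → ℝ) :
    dsum n X ((n : ℤ) - 1) = X (⟨n - 1, by have := X; omega⟩, ⟨0, by have := X; omega⟩) := by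
  rw [dsum]
  rw [show Finset.univ.filter (fun p : Fin n × Fin n => (p.1 : ℤ) - (p.2 : ℤ) = (n : ℤ) - 1)
      = {(⟨n - 1, by have := X; omega⟩, ⟨0, by have := X; omega⟩)} from by
    ext ⟨a, b⟩
    have := a.isLt; have := b.isLt
    simp [Prod.ext_iff, Fin.ext_iff]
    try omega]
  rw [Finset.sum_singleton]

lemma dsum_bot (n : ℕ) (hn : 4 ≤ n) (X : Fin n × Fin n → ℝ) :
    dsum n X (-(n : ℤ) + 1) = X (⟨0, by have := X; omega⟩, ⟨n - 1, by have := X; omega⟩) := by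
  rw [dsum]
  rw [show Finset.univ.filter (fun p : Fin n × Fin n => (p.1 : ℤ) - (p.2 : ℤ) = -(n : ℤ) + 1)
      = {(⟨0, by have := X; omega⟩, ⟨n - 1, by have := X; omega⟩)} from by
    ext ⟨a, b⟩
    have := a.isLt; have := b.isLt
    simp [Prod.ext_iff, Fin.ext_iff]
    try omega]
  rw [Finset.sum_singleton]

/-- characterization of eigenvectors of `Q(n)` for the eigenvalue `-4`. -/
theorem queens_eigenvector_iff (n : ℕ) (h : 4 ≤ n) (X : Fin n × Fin n → ℝ) (hX : X ≠ 0) :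
    ((queensGraph n).adjMatrix ℝ).mulVec X = (-4 : ℝ) • X ↔
      ((∀ k : Fin n, ∑ j : Fin n, X (k, j) = 0) ∧
       (∀ k : Fin n, ∑ i : Fin n, X (i, k) = 0) ∧
       (∀ c : ℕ, 1 ≤ c → c ≤ 2 * n - 3 →
         ∑ p ∈ Finset.univ.filter (fun p : Fin n × Fin n => (p.1 : ℕ) + (p.2 : ℕ) = c),
           X p = 0) ∧
       (∀ c : ℤ, c.natAbs ≤ n - 2 →
         ∑ p ∈ Finset.univ.filter (fun p : Fin n × Fin n => (p.1 : ℤ) - (p.2 : ℤ) = c),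
           X p = 0) ∧
       X (⟨0, by omega⟩, ⟨0, by omega⟩) = 0 ∧ X (⟨0, by omega⟩, ⟨n - 1, by omega⟩) = 0 ∧
       X (⟨n - 1, by omega⟩, ⟨0, by omega⟩) = 0 ∧
       X (⟨n - 1, by omega⟩, ⟨n - 1, by omega⟩) = 0) := by
  constructor
  · intro hEq
    have hE : ∀ p : Fin n × Fin n,
        (∑ j : Fin n, X (p.1, j)) + (∑ i : Fin n, X (i, p.2)) +
        dsum n X ((p.1 : ℤ) - (p.2 : ℤ)) + asum n X ((p.1 : ℕ) + (p.2 : ℕ)) = 0 := by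
      intro p
      have := congrFun hEq p
      rw [mulVec_formula] at this
      simp only [Pi.smul_apply, smul_eq_mul] at this
      linarith
    obtain ⟨hr, hc, hd, ha⟩ := lines_zero n X hE
    refine ⟨hr, hc, fun c _ _ => ha c, fun c _ => hd c, ?_, ?_, ?_, ?_⟩
    · rw [← asum_zero n h X]; exact ha 0
    · rw [← dsum_bot n h X]; exact hd _
    · rw [← dsum_top n h X]; exact hd _
    · rw [← asum_top n h X]; exact ha _
  · rintro ⟨hr, hc, ha, hd, h00, h0n, hn0, hnn⟩
    funext p
    rw [mulVec_formula]
    simp only [Pi.smul_apply, smul_eq_mul]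
    have hD : dsum n X ((p.1 : ℤ) - (p.2 : ℤ)) = 0 := by
      set c : ℤ := (p.1 : ℤ) - (p.2 : ℤ) with hcdef
      have h1 := p.1.isLt; have h2 := p.2.isLt
      by_cases hcs : c.natAbs ≤ n - 2
      · exact hd c hcs
      · have : c = (n : ℤ) - 1 ∨ c = -(n : ℤ) + 1 := by omega
        rcases this with hc1 | hc1
        · rw [hc1, dsum_top n h X]; exact hn0
        · rw [hc1, dsum_bot n h X]; exact h0n
    have hA : asum n X ((p.1 : ℕ) + (p.2 : ℕ)) = 0 := by
      set c : ℕ := (p.1 : ℕ) + (p.2 : ℕ) with hcdef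
      have h1 := p.1.isLt; have h2 := p.2.isLt
      by_cases hcs : 1 ≤ c ∧ c ≤ 2 * n - 3
      · exact ha c hcs.1 hcs.2
      · have : c = 0 ∨ c = 2 * n - 2 := by omega
        rcases this with hc1 | hc1
        · rw [hc1, asum_zero n h X]; exact h00
        · rw [hc1, asum_top n h X]; exact hnn
    rw [hr p.1, hc p.2, hD, hA]
    ring
end

section
/- For n ≥ 4 and (a,b) ∈ [n−3] × [n−3], let X_n^{(a,b)} ∈ ℝ^{[n]×[n]} be the vector obtained by placing a translated copy of X_4 at position (a,b): X_n^{(a,b)}(i,j) = X_4(i−a+1, j−b+1) when a ≤ i ≤ a+3 and b ≤ j ≤ b+3, and 0 otherwise, where X_4 has entries 1 at (1,2),(2,4),(3,1),(4,3), entries −1 at (1,3),(2,1),(3,4),(4,2), and 0 elsewhere. Then the family {X_n^{(a,b)} : (a,b) ∈ [n−3]²} is linearly independent. -/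
open Finset

lemma X4_eval (i j : Fin 4) (hi : (i : ℕ) = 0) (hj1 : (j : ℕ) = 1) :
    X4 (i, j) = 1 := by
  simp only [X4, Fin.ext_iff]
  norm_num [hi, hj1]

lemma X4_eval0 (i j : Fin 4) (hi : (i : ℕ) = 0) (hj : (j : ℕ) = 0) :
    X4 (i, j) = 0 := by
  simp only [X4, Fin.ext_iff]
  norm_num [hi, hj]

/-- the family of translated copies of `X₄` is linearly independent. -/
theorem Xab_linearIndependent (n : ℕ) (h : 4 ≤ n) :
    LinearIndependent ℝ (fun ab : Fin (n - 3) × Fin (n - 3) =>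
      Xab n (ab.1 : ℕ) (ab.2 : ℕ)) := by
  rw [Fintype.linearIndependent_iff]
  intro g hg
  by_contra hc
  push_neg at hc
  set S : Finset (Fin (n - 3) × Fin (n - 3)) := Finset.univ.filter (fun i => g i ≠ 0) with hSdef
  have hS : S.Nonempty := by
    obtain ⟨i, hi⟩ := hc
    exact ⟨i, by simp [hSdef, hi]⟩
  obtain ⟨imin, himin, hmin⟩ := S.exists_min_image (fun i => (i.1 : ℕ)) hS
  set T : Finset (Fin (n - 3) × Fin (n - 3)) := S.filter (fun i => i.1 = imin.1) with hTdef
  have hT : T.Nonempty := ⟨imin, by simp [hTdef, himin]⟩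
  obtain ⟨i₀, hi₀T, hmin2⟩ := T.exists_min_image (fun i => (i.2 : ℕ)) hT
  have hi₀S : i₀ ∈ S := (Finset.mem_filter.mp hi₀T).1
  have hi₀1 : i₀.1 = imin.1 := (Finset.mem_filter.mp hi₀T).2
  have hg₀ : g i₀ ≠ 0 := by
    have := Finset.mem_filter.mp hi₀S
    simpa using this.2
  -- bounds
  have hb1 : (i₀.1 : ℕ) < n - 3 := i₀.1.isLt
  have hb2 : (i₀.2 : ℕ) < n - 3 := i₀.2.isLt
  set p : Fin n × Fin n := (⟨(i₀.1 : ℕ), by omega⟩, ⟨(i₀.2 : ℕ) + 1, by omega⟩) with hpdef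
  have hsum := congrFun hg p
  rw [Finset.sum_apply] at hsum
  simp only [Pi.smul_apply, Pi.zero_apply, smul_eq_mul] at hsum
  have key : ∀ j ∈ Finset.univ, j ≠ i₀ →
      g j * Xab n (j.1 : ℕ) (j.2 : ℕ) p = 0 := by
    intro j _ hj
    by_cases hgj : g j = 0
    · simp [hgj]
    · have hjS : j ∈ S := by simp [hSdef, hgj]
      have h1 : (i₀.1 : ℕ) ≤ (j.1 : ℕ) := by
        have := hmin j hjS
        simp only [hi₀1]
        omega
      have hXz : Xab n (j.1 : ℕ) (j.2 : ℕ) p = 0 := by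
        rw [Xab]
        split_ifs with hcond
        · -- then j.1 = i₀.1, and j.2 ∈ {i₀.2, i₀.2+1}
          simp only [hpdef] at hcond
          have hj1 : (j.1 : ℕ) = (i₀.1 : ℕ) := by omega
          have hjT : j ∈ T := by
            refine Finset.mem_filter.mpr ⟨hjS, ?_⟩
            rw [hi₀1] at hj1
            exact_mod_cast Fin.ext hj1
          have h2 : (i₀.2 : ℕ) ≤ (j.2 : ℕ) := hmin2 j hjT
          have hne : (j.1 : ℕ) ≠ (i₀.1 : ℕ) ∨ (j.2 : ℕ) ≠ (i₀.2 : ℕ) := by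
            by_contra hcon
            push_neg at hcon
            exact hj (Prod.ext (Fin.ext hcon.1) (Fin.ext hcon.2))
          have hj2 : (j.2 : ℕ) = (i₀.2 : ℕ) + 1 := by omega
          apply X4_eval0 <;> simp [hpdef] <;> omega
        · rfl
      simp [hXz]
  rw [Finset.sum_eq_single_of_mem i₀ (Finset.mem_univ i₀) key] at hsum
  have hX1 : Xab n (i₀.1 : ℕ) (i₀.2 : ℕ) p = 1 := by
    rw [Xab]
    split_ifs with hcond
    · apply X4_eval <;> simp [hpdef] <;> omega
    · exfalso; apply hcond; simp only [hpdef]; omega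
  rw [hX1, mul_one] at hsum
  exact hg₀ hsum
end

section
/- For n ≥ 4 and each (a,b) ∈ [n−3] × [n−3], the vector X_n^{(a,b)} (the translated copy of the 4×4 pattern X_4 placed with upper-left corner at (a,b), zero elsewhere) is an eigenvector of the n-Queens' graph Q(n) with eigenvalue −4. -/
open Finset

abbrev Eint (u v r c : ℤ) : Prop :=
  ¬(u = r ∧ v = c) ∧ (u = r ∨ v = c ∨ u - v = r - c ∨ u + v = r + c)
def eint (u v r c : ℤ) : ℤ := if Eint u v r c then 1 else 0
def Xint (u v : ℤ) : ℤ :=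
  if (u=0∧v=1)∨(u=1∧v=3)∨(u=2∧v=0)∨(u=3∧v=2) then 1
  else if (u=0∧v=2)∨(u=1∧v=0)∨(u=2∧v=3)∨(u=3∧v=1) then -1 else 0

lemma eint_out (u v r c : ℤ) (h : ¬(0 ≤ u ∧ u ≤ 3 ∧ 0 ≤ v ∧ v ≤ 3))
    (hr1 : 0 ≤ r) (hr2 : r ≤ 3) (hc1 : 0 ≤ c) (hc2 : c ≤ 3) :
    eint u v r c = (if u = r then 1 else 0) + (if v = c then 1 else 0)
      + (if u - v = r - c then 1 else 0) + (if u + v = r + c then 1 else 0) := by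
  unfold eint
  split_ifs <;> omega

lemma key_out (u v : ℤ) (h : ¬(0 ≤ u ∧ u ≤ 3 ∧ 0 ≤ v ∧ v ≤ 3)) :
    eint u v 0 1 + eint u v 1 3 + eint u v 2 0 + eint u v 3 2
      - eint u v 0 2 - eint u v 1 0 - eint u v 2 3 - eint u v 3 1 = 0 := by
  rw [eint_out u v 0 1 h, eint_out u v 1 3 h, eint_out u v 2 0 h, eint_out u v 3 2 h,
      eint_out u v 0 2 h, eint_out u v 1 0 h, eint_out u v 2 3 h, eint_out u v 3 1 h]
    <;> norm_num
  ring

lemma key_int (u v : ℤ) :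
    eint u v 0 1 + eint u v 1 3 + eint u v 2 0 + eint u v 3 2
      - eint u v 0 2 - eint u v 1 0 - eint u v 2 3 - eint u v 3 1
      = -4 * Xint u v := by
  by_cases h : 0 ≤ u ∧ u ≤ 3 ∧ 0 ≤ v ∧ v ≤ 3
  · obtain ⟨h1,h2,h3,h4⟩ := h
    interval_cases u <;> interval_cases v <;> decide
  · have hx : Xint u v = 0 := by unfold Xint; split_ifs <;> omega
    rw [hx, key_out u v h]
    ring

lemma fin4_0 : ∀ q : Fin 4, q = 0 ↔ (q:ℕ) = 0 := by decide
lemma fin4_1 : ∀ q : Fin 4, q = 1 ↔ (q:ℕ) = 1 := by decide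
lemma fin4_2 : ∀ q : Fin 4, q = 2 ↔ (q:ℕ) = 2 := by decide
lemma fin4_3 : ∀ q : Fin 4, q = 3 ↔ (q:ℕ) = 3 := by decide

lemma X4_eq (u v : ℕ) (hu : u < 4) (hv : v < 4) :
    X4 (⟨u,hu⟩,⟨v,hv⟩) = ((Xint u v : ℤ) : ℝ) := by
  unfold X4 Xint
  simp only [fin4_0, fin4_1, fin4_2, fin4_3]
  split_ifs <;> first | (exfalso; omega) | norm_num

lemma Xab_eq_s18 (n a b : ℕ) (q : Fin n × Fin n) :
    Xab n a b q = ((Xint ((q.1:ℕ) - (a:ℤ)) ((q.2:ℕ) - (b:ℤ)) : ℤ) : ℝ) := by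
  unfold Xab
  by_cases h : a ≤ (q.1 : ℕ) ∧ (q.1 : ℕ) ≤ a + 3 ∧ b ≤ (q.2 : ℕ) ∧ (q.2 : ℕ) ≤ b + 3
  · rw [dif_pos h, X4_eq]
    congr 2 <;> omega
  · rw [dif_neg h]
    have h1 : Xint ((q.1:ℕ) - (a:ℤ)) ((q.2:ℕ) - (b:ℤ)) = 0 := by
      unfold Xint; split_ifs <;> omega
    rw [h1]; norm_num

lemma adj_iff (n a b : ℕ) (ha : a + 4 ≤ n) (hb : b + 4 ≤ n) (p : Fin n × Fin n)
    (r c : ℕ) (hr : r < 4) (hc : c < 4) :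
    (queensGraph n).Adj p (⟨a + r, by omega⟩, ⟨b + c, by omega⟩) ↔
      Eint ((p.1:ℕ) - (a:ℤ)) ((p.2:ℕ) - (b:ℤ)) r c := by
  simp only [queensGraph, SimpleGraph.fromRel_adj, queensRel, ne_eq, Prod.ext_iff,
    Fin.ext_iff, Eint]
  push_cast
  omega

lemma key_sum (n a b : ℕ) (ha : a + 4 ≤ n) (hb : b + 4 ≤ n) (p : Fin n × Fin n) :
    ∑ q, (if (queensGraph n).Adj p q then Xab n a b q else 0)
      = -4 * Xab n a b p := by
  classical
  set u : ℤ := ((p.1:ℕ):ℤ) - a with hu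
  set v : ℤ := ((p.2:ℕ):ℤ) - b with hv
  set j : Fin 4 × Fin 4 → Fin n × Fin n :=
    fun rc => (⟨a + rc.1, by omega⟩, ⟨b + rc.2, by omega⟩) with hj
  have hjinj : Function.Injective j := by
    intro x y hxy
    simp only [hj, Prod.ext_iff, Fin.ext_iff] at hxy ⊢
    omega
  have hsub : (Finset.image j univ) ⊆ univ := subset_univ _
  rw [← Finset.sum_subset hsub ?_]
  · rw [Finset.sum_image (fun x _ y _ h => hjinj h)]
    have hterm : ∀ rc : Fin 4 × Fin 4,
        (if (queensGraph n).Adj p (j rc) then Xab n a b (j rc) else 0)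
          = if Eint u v rc.1 rc.2 then ((Xint rc.1 rc.2 : ℤ) : ℝ) else 0 := by
      intro rc
      obtain ⟨r, c⟩ := rc
      simp only [hj]
      simp only [adj_iff n a b ha hb p r c r.isLt c.isLt]
      by_cases hE : Eint u v r c
      · rw [if_pos hE, if_pos hE, Xab_eq_s18]
        congr 2 <;> push_cast <;> omega
      · rw [if_neg hE, if_neg hE]
    simp only [hterm]
    rw [Fintype.sum_prod_type]
    simp only [Fin.sum_univ_four]
    have c0 : ((0 : Fin 4) : ℤ) = 0 := rfl
    have c1 : ((1 : Fin 4) : ℤ) = 1 := rfl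
    have c2 : ((2 : Fin 4) : ℤ) = 2 := rfl
    have c3 : ((3 : Fin 4) : ℤ) = 3 := rfl
    simp only [c0, c1, c2, c3]
    have hXp : Xab n a b p = ((Xint u v : ℤ) : ℝ) := Xab_eq_s18 n a b p
    rw [hXp, show (-4 : ℝ) * ((Xint u v : ℤ) : ℝ) = ((-4 * Xint u v : ℤ) : ℝ) by push_cast; ring,
      ← key_int u v]
    have hXv : ∀ r c : ℤ, (if Eint u v r c then ((Xint r c : ℤ) : ℝ) else 0)
        = ((if Eint u v r c then Xint r c else 0 : ℤ) : ℝ) := by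
      intro r c; split <;> norm_num
    simp only [hXv]
    have hneg : ∀ (P : Prop) (inst : Decidable P), (if P then (-1:ℝ) else 0)
        = -(if P then (1:ℝ) else 0) := by
      intro P inst; split <;> ring
    push_cast [eint]
    norm_num [Xint]
    simp only [hneg]
    ring
  · intro q _ hq
    have hz : Xab n a b q = 0 := by
      unfold Xab
      rw [dif_neg]
      intro hblk
      apply hq
      simp only [Finset.mem_image]
      refine ⟨(⟨(q.1:ℕ) - a, by omega⟩, ⟨(q.2:ℕ) - b, by omega⟩), mem_univ _, ?_⟩
      simp only [hj, Prod.ext_iff, Fin.ext_iff, Fin.val_mk]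
      omega
    rw [hz, ite_self]

/-- each translated copy of `X₄` is an eigenvector of `Q(n)` with
eigenvalue `-4`. -/
theorem Xab_eigenvector (n : ℕ) (h : 4 ≤ n) (a b : Fin (n - 3)) :
    Xab n (a : ℕ) (b : ℕ) ≠ 0 ∧
      ((queensGraph n).adjMatrix ℝ).mulVec (Xab n (a : ℕ) (b : ℕ)) =
        (-4 : ℝ) • Xab n (a : ℕ) (b : ℕ) := by
  have ha : (a : ℕ) + 4 ≤ n := by have := a.isLt; omega
  have hb : (b : ℕ) + 4 ≤ n := by have := b.isLt; omega
  constructor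
  · intro h0
    have hx : Xab n (a : ℕ) (b : ℕ) (⟨(a : ℕ), by omega⟩, ⟨(b : ℕ) + 1, by omega⟩) = 1 := by
      rw [Xab_eq_s18]
      simp only [Fin.val_mk]
      rw [show (((a : ℕ) : ℤ)) - ((a : ℕ) : ℤ) = 0 by ring,
        show ((((b : ℕ) + 1 : ℕ)) : ℤ) - ((b : ℕ) : ℤ) = 1 by push_cast; ring]
      norm_num [Xint]
    have hpt := congrFun h0 (⟨(a : ℕ), by omega⟩, ⟨(b : ℕ) + 1, by omega⟩)
    rw [hx] at hpt
    exact one_ne_zero hpt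
  · funext p
    have hks := key_sum n (a : ℕ) (b : ℕ) ha hb p
    simp only [Matrix.mulVec, dotProduct, SimpleGraph.adjMatrix_apply, ite_mul,
      one_mul, zero_mul, Pi.smul_apply, smul_eq_mul]
    exact hks
end

section
/- Every eigenvalue of the n-Queens' graph Q(n), for n ≥ 1, is at least -4. -/
open Finset

/-- Sum of an indicator quadratic form over fibers of `g` is nonnegative. -/
lemma P_nonneg {V α : Type*} [Fintype V] [DecidableEq α] (g : V → α) (X : V → ℝ) :
    0 ≤ ∑ u, ∑ v, (if g u = g v then X u * X v else 0) := by
  classical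
  set T : α → ℝ := fun c => ∑ v ∈ Finset.univ.filter (fun v => g v = c), X v with hT
  have step1 : ∀ u : V, ∑ v, (if g u = g v then X u * X v else 0) = X u * T (g u) := by
    intro u
    rw [hT, Finset.mul_sum, Finset.sum_filter]
    apply Finset.sum_congr rfl
    intro v _
    simp [eq_comm]
  calc (0:ℝ) ≤ ∑ c ∈ Finset.univ.image g, (T c)^2 :=
        Finset.sum_nonneg fun c _ => sq_nonneg _
    _ = ∑ c ∈ Finset.univ.image g, ∑ u ∈ Finset.univ.filter (fun u => g u = c),
          X u * T (g u) := by
        apply Finset.sum_congr rfl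
        intro c _
        rw [show ∑ u ∈ Finset.univ.filter (fun u => g u = c), X u * T (g u)
              = ∑ u ∈ Finset.univ.filter (fun u => g u = c), X u * T c from
            Finset.sum_congr rfl (by intro u hu; rw [(Finset.mem_filter.mp hu).2]),
          ← Finset.sum_mul]
        ring
    _ = ∑ u, X u * T (g u) :=
        Finset.sum_fiberwise_of_maps_to (fun x _ => Finset.mem_image_of_mem g (Finset.mem_univ x)) _
    _ = ∑ u, ∑ v, (if g u = g v then X u * X v else 0) := by
        apply Finset.sum_congr rfl
        intro u _
        exact (step1 u).symm

/-- Pointwise decomposition of the queens adjacency matrix. -/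
lemma queens_key (n : ℕ) (u v : Fin n × Fin n) :
    ((queensGraph n).adjMatrix ℝ) u v =
      (if u.1 = v.1 then (1:ℝ) else 0) + (if u.2 = v.2 then 1 else 0)
      + (if (u.1 : ℤ) - (u.2 : ℤ) = (v.1 : ℤ) - (v.2 : ℤ) then 1 else 0)
      + (if (u.1 : ℤ) + (u.2 : ℤ) = (v.1 : ℤ) + (v.2 : ℤ) then 1 else 0)
      - (if u = v then 4 else 0) := by
  obtain ⟨⟨u1, hu1⟩, ⟨u2, hu2⟩⟩ := u
  obtain ⟨⟨v1, hv1⟩, ⟨v2, hv2⟩⟩ := v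
  rw [SimpleGraph.adjMatrix_apply]
  simp only [SimpleGraph.adjMatrix_apply, queensGraph, SimpleGraph.fromRel_adj, queensRel,
    Prod.mk.injEq, Fin.mk.injEq, ne_eq, Prod.ext_iff, Fin.ext_iff]
  split_ifs <;> first | (exfalso; omega) | norm_num

/-- every eigenvalue of `Q(n)` is at least `-4`. -/
theorem queens_eigenvalue_lower_bound (n : ℕ) (h : 1 ≤ n) (μ : ℝ)
    (hμ : IsAdjEigenvalue (queensGraph n) μ) : (-4 : ℝ) ≤ μ := by
  classical
  obtain ⟨X, hX0, hXe⟩ := hμ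
  set S : ℝ := ∑ u : Fin n × Fin n, X u ^ 2 with hS
  -- S > 0
  have hSpos : 0 < S := by
    obtain ⟨u, hu⟩ := Function.ne_iff.mp hX0
    exact Finset.sum_pos' (fun i _ => sq_nonneg _)
      ⟨u, Finset.mem_univ u, lt_of_le_of_ne (sq_nonneg _) (Ne.symm (pow_ne_zero 2 hu))⟩
  -- the quadratic form equals μ * S
  have hQ : ∑ u : Fin n × Fin n, ∑ v : Fin n × Fin n, ((queensGraph n).adjMatrix ℝ) u v * (X u * X v)
      = μ * S := by
    have : ∀ u : Fin n × Fin n, ∑ v : Fin n × Fin n, ((queensGraph n).adjMatrix ℝ) u v * (X u * X v)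
        = X u * (((queensGraph n).adjMatrix ℝ).mulVec X) u := by
      intro u
      rw [Matrix.mulVec, dotProduct, Finset.mul_sum]
      apply Finset.sum_congr rfl
      intro v _
      ring
    rw [Finset.sum_congr rfl (fun u _ => this u), hXe, hS, Finset.mul_sum]
    apply Finset.sum_congr rfl
    intro u _
    simp [Pi.smul_apply, smul_eq_mul]
    ring
  -- expand via the pointwise decomposition
  have hexp : ∑ u : Fin n × Fin n, ∑ v : Fin n × Fin n, ((queensGraph n).adjMatrix ℝ) u v * (X u * X v)
      = (∑ u : Fin n × Fin n, ∑ v : Fin n × Fin n, (if u.1 = v.1 then X u * X v else 0))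
      + (∑ u : Fin n × Fin n, ∑ v : Fin n × Fin n, (if u.2 = v.2 then X u * X v else 0))
      + (∑ u : Fin n × Fin n, ∑ v : Fin n × Fin n,
          (if (u.1 : ℤ) - (u.2 : ℤ) = (v.1 : ℤ) - (v.2 : ℤ) then X u * X v else 0))
      + (∑ u : Fin n × Fin n, ∑ v : Fin n × Fin n,
          (if (u.1 : ℤ) + (u.2 : ℤ) = (v.1 : ℤ) + (v.2 : ℤ) then X u * X v else 0))
      - 4 * S := by
    have key : ∀ u v : Fin n × Fin n, ((queensGraph n).adjMatrix ℝ) u v * (X u * X v)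
        = (if u.1 = v.1 then X u * X v else 0) + (if u.2 = v.2 then X u * X v else 0)
        + (if (u.1 : ℤ) - (u.2 : ℤ) = (v.1 : ℤ) - (v.2 : ℤ) then X u * X v else 0)
        + (if (u.1 : ℤ) + (u.2 : ℤ) = (v.1 : ℤ) + (v.2 : ℤ) then X u * X v else 0)
        - (if u = v then 4 * (X u * X v) else 0) := by
      intro u v
      rw [queens_key]
      split_ifs <;> ring
    rw [Finset.sum_congr rfl (fun u (_ : u ∈ Finset.univ) =>
      Finset.sum_congr rfl (fun v (_ : v ∈ Finset.univ) => key u v))]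
    have diag : ∑ u : Fin n × Fin n, ∑ v : Fin n × Fin n, (if u = v then 4 * (X u * X v) else 0) = 4 * S := by
      rw [hS, Finset.mul_sum]
      apply Finset.sum_congr rfl
      intro u _
      rw [Finset.sum_ite_eq Finset.univ u (fun v => 4 * (X u * X v))]
      simp
      ring
    simp only [Finset.sum_sub_distrib, Finset.sum_add_distrib, diag]
  -- each quadratic form is nonnegative
  have h1 := P_nonneg (fun u : Fin n × Fin n => u.1) X
  have h2 := P_nonneg (fun u : Fin n × Fin n => u.2) X
  have h3 := P_nonneg (fun u : Fin n × Fin n => (u.1 : ℤ) - (u.2 : ℤ)) X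
  have h4 := P_nonneg (fun u : Fin n × Fin n => (u.1 : ℤ) + (u.2 : ℤ)) X
  have hge : (-4 : ℝ) * S ≤ μ * S := by
    rw [← hQ, hexp]
    nlinarith [h1, h2, h3, h4]
  nlinarith [hge, hSpos]
end
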